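/- Let h : [0,∞) → ℝ satisfy Σᵢ h(pᵢ) = 0 for every counting vector (p₁,...,p_N) (all N ≥ 1). If h is bounded on some interval [a,b] with 0 ≤ a < b, then h(p) = (1−p)·h(0) for all p ∈ [0,∞). -/

import Mathlib

/-- A counting vector of dimension `N`: nonnegative entries summing to `N`. -/
def IsCountingVector {N : ℕ} (P : Fin N → ℝ) : Prop :=
  (∀ i, 0 ≤ P i) ∧ ∑ i, P i = N

theorem null_generating_function_is_linear (h : ℝ → ℝ)
    (hsum : ∀ (N : ℕ) (P : Fin N → ℝ), IsCountingVector P → ∑ i, h (P i) = 0)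
    (a b : ℝ) (ha : 0 ≤ a) (hab : a < b)
    (hbd : ∃ C : ℝ, ∀ p ∈ Set.Icc a b, |h p| ≤ C) :
    ∀ p : ℝ, 0 ≤ p → h p = (1 - p) * h 0 := by
  obtain ⟨C, hC⟩ := hbd
  have h1 : h 1 = 0 := by
    have := hsum 1 (fun _ => 1) ⟨fun _ => zero_le_one, by simp⟩
    simpa using this
  -- Key functional equation
  have key : ∀ x y : ℝ, 0 ≤ x → 0 ≤ y → h (x + y) + h 0 = h x + h y := by
    intro x y hx hy
    set n := ⌈x + y⌉₊ with hn
    have hle : x + y ≤ (n : ℝ) := Nat.le_ceil _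
    set r : ℝ := ((n : ℝ) + 3) - (x + y) with hrdef
    have hr : 0 ≤ r := by simp only [hrdef]; linarith
    have S1 := hsum (n + 3) (Fin.cons x (Fin.cons y (Fin.cons r (fun _ => 0)))) ?_
    · have S2 := hsum (n + 3) (Fin.cons (x + y) (Fin.cons r (fun _ : Fin (n+1) => 0))) ?_
      · simp only [Fin.sum_univ_succ, Fin.cons_zero, Fin.cons_succ,
          Finset.sum_const, Finset.card_univ, Fintype.card_fin, nsmul_eq_mul] at S1 S2
        push_cast at S1 S2
        linarith
      · constructor
        · intro i
          refine Fin.cases (by simpa using add_nonneg hx hy) (fun j => ?_) i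
          refine Fin.cases (by simpa) (fun k => ?_) j
          simp
        · simp only [Fin.sum_univ_succ, Fin.cons_zero, Fin.cons_succ,
            Finset.sum_const, Finset.card_univ, Fintype.card_fin, smul_zero]
          push_cast
          simp only [hrdef]
          ring
    · constructor
      · intro i
        refine Fin.cases (by simpa) (fun j => ?_) i
        refine Fin.cases (by simpa) (fun k => ?_) j
        refine Fin.cases (by simpa) (fun l => ?_) k
        simp
      · simp only [Fin.sum_univ_succ, Fin.cons_zero, Fin.cons_succ,
          Finset.sum_const, Finset.card_univ, Fintype.card_fin, smul_zero]
        push_cast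
        simp only [hrdef]
        ring
  -- the auxiliary additive function
  set f : ℝ → ℝ := fun x => h x - h 0 + x * h 0 with hf
  have fadd : ∀ x y : ℝ, 0 ≤ x → 0 ≤ y → f (x + y) = f x + f y := by
    intro x y hx hy
    have := key x y hx hy
    simp only [hf]
    ring_nf
    linarith
  have f0 : f 0 = 0 := by simp [hf]
  have f1 : f 1 = 0 := by simp [hf, h1]
  have fsmul : ∀ (m : ℕ) (x : ℝ), 0 ≤ x → f (m * x) = m * f x := by
    intro m
    induction m with
    | zero => intro x hx; simpa using f0
    | succ k ih =>
      intro x hx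
      have : ((k : ℝ) + 1) * x = (k : ℝ) * x + x := by ring
      push_cast
      rw [this, fadd _ _ (by positivity) hx, ih x hx]
      ring
  have fnat : ∀ m : ℕ, f m = 0 := by
    intro m
    have := fsmul m 1 zero_le_one
    simpa [f1] using this
  have frat : ∀ q : ℚ, 0 ≤ q → f q = 0 := by
    intro q hq
    have hden : (0 : ℝ) < (q.den : ℝ) := by
      exact_mod_cast q.pos
    have hnum : (q.den : ℝ) * (q : ℝ) = ((q.num.toNat : ℕ) : ℝ) := by
      have e1 : ((q.num.toNat : ℕ) : ℝ) = ((q.num : ℤ) : ℝ) := by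
        exact_mod_cast congrArg (Int.cast : ℤ → ℝ) (Int.toNat_of_nonneg (Rat.num_nonneg.mpr hq))
      rw [e1, Rat.cast_def]
      field_simp
    have hq' := fsmul q.den q (by exact_mod_cast hq)
    rw [hnum, fnat] at hq'
    rcases mul_eq_zero.mp hq'.symm with h' | h'
    · exact absurd h' hden.ne'
    · exact h'
  -- boundedness of f on [0, b - a]
  set δ : ℝ := b - a with hδ
  have hδpos : 0 < δ := by simp only [hδ]; linarith
  set C₂ : ℝ := 2 * (C + |h 0| + b * |h 0|) with hC₂
  have fbd : ∀ t : ℝ, 0 ≤ t → t ≤ δ → |f t| ≤ C₂ := by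
    intro t ht htδ
    have hbound : ∀ s : ℝ, a ≤ s → s ≤ b → |f s| ≤ C + |h 0| + b * |h 0| := by
      intro s hs1 hs2
      have hs0 : 0 ≤ s := le_trans ha hs1
      have h1' : |h s| ≤ C := hC s ⟨hs1, hs2⟩
      have : |f s| ≤ |h s| + |h 0| + |s| * |h 0| := by
        simp only [hf]
        calc |h s - h 0 + s * h 0| ≤ |h s - h 0| + |s * h 0| := abs_add_le _ _
          _ ≤ |h s| + |h 0| + |s| * |h 0| := by
              rw [abs_mul]
              have := abs_sub (h s) (h 0)
              nlinarith [abs_sub_abs_le_abs_sub (h s) (h 0), abs_sub (h s) (h 0), abs_add_le (h s) (-h 0)]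
      have : |s| * |h 0| ≤ b * |h 0| := by
        apply mul_le_mul_of_nonneg_right _ (abs_nonneg _)
        rw [abs_of_nonneg hs0]; exact hs2
      calc |f s| ≤ |h s| + |h 0| + b * |h 0| := by
            have h2 : |f s| ≤ |h s| + |h 0| + |s| * |h 0| := by
              simp only [hf]
              calc |h s - h 0 + s * h 0| ≤ |h s - h 0| + |s * h 0| := abs_add_le _ _
                _ ≤ (|h s| + |h 0|) + |s| * |h 0| := by
                    rw [abs_mul]
                    exact add_le_add_left (abs_sub _ _) _
            linarith
        _ ≤ C + |h 0| + b * |h 0| := by linarith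
    have e : f (a + t) = f a + f t := fadd a t ha ht
    have b1 : |f (a + t)| ≤ C + |h 0| + b * |h 0| := hbound _ (by linarith) (by simp only [hδ] at htδ; linarith)
    have b2 : |f a| ≤ C + |h 0| + b * |h 0| := hbound _ le_rfl (le_of_lt hab)
    have : f t = f (a + t) - f a := by linarith [e]
    rw [this]
    calc |f (a + t) - f a| ≤ |f (a + t)| + |f a| := abs_sub _ _
      _ ≤ C₂ := by simp only [hC₂]; linarith
  -- conclude f p = 0 for p ≥ 0
  have fzero : ∀ p : ℝ, 0 ≤ p → f p = 0 := by
    intro p hp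
    by_contra hne
    have hfp : 0 < |f p| := abs_pos.mpr hne
    obtain ⟨m, hm⟩ := exists_nat_gt (C₂ / |f p|)
    have hm1 : (1 : ℕ) ≤ m + 1 := le_add_self
    have hmpos : (0 : ℝ) < (m : ℝ) + 1 := by positivity
    -- show (m+1) * |f p| ≤ C₂
    have hkey : ((m : ℝ) + 1) * |f p| ≤ C₂ := by
      set t : ℝ := ((m : ℕ) + 1 : ℕ) * p with htdef
      have ht0 : 0 ≤ t := by positivity
      have et : f t = ((m : ℝ) + 1) * f p := by
        rw [htdef, fsmul (m + 1) p hp]; push_cast; ring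
      have : |f t| = ((m : ℝ) + 1) * |f p| := by
        rw [et, abs_mul, abs_of_pos hmpos]
      rw [← this]
      rcases le_or_gt t δ with hcase | hcase
      · exact fbd t ht0 hcase
      · obtain ⟨q, hq1, hq2⟩ := exists_rat_btwn (show t - δ < t by linarith)
        have hq0 : (0 : ℝ) ≤ (q : ℝ) := by linarith
        have hq0' : (0 : ℚ) ≤ q := by exact_mod_cast hq0
        have e2 : f t = f q + f (t - q) := by
          have := fadd q (t - q) hq0 (by linarith)
          simpa [add_sub_cancel] using this
        rw [e2, frat q hq0', zero_add]
        exact fbd (t - (q : ℝ)) (by linarith) (by linarith)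
    have : C₂ < ((m : ℝ) + 1) * |f p| := by
      rw [div_lt_iff₀ hfp] at hm
      nlinarith [hfp]
    linarith
  intro p hp
  have := fzero p hp
  simp only [hf] at this
  linarith
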